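/- Let g = (g_1, …, g_s) ⊂ ℚ[z_1, …, z_k] be invariant under S_{t_1} × ⋯ × S_{t_k} and satisfy condition (A), i.e. the Jacobian matrix of g has rank s at every point of V(g) ⊂ ℂ^ℓ where ℓ = t_1 + ⋯ + t_k. For each i let h_i ∈ ℚ[p_{1,1}, …, p_{t_k,k}] be the unique polynomial with g_i = h_i(P_{1,1}, …, P_{t_k,k}), where P_{j,i} is the j-th Newton power sum in the block z_i. Then the sequence (h_1, …, h_s) also satisfies condition (A): its Jacobian matrix with respect to the ℓ variables p_{j,i} has rank s at every point of V(h_1, …, h_s) ⊂ ℂ^ℓ. -/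

import Mathlib

open MvPolynomial


lemma my_chain {σ : Type*} [Fintype σ] [DecidableEq σ] {R : Type*} [CommSemiring R]
    (Φ : σ → MvPolynomial σ R) (f : MvPolynomial σ R) (u : σ) :
    pderiv u (aeval Φ f) = ∑ v, aeval Φ (pderiv v f) * pderiv u (Φ v) := by
  induction f using MvPolynomial.induction_on with
  | C a => simp
  | add p q hp hq => simp only [map_add, hp, hq, add_mul, Finset.sum_add_distrib]
  | mul_X p v0 hp =>
    simp only [map_mul, aeval_X, pderiv_mul, hp, pderiv_X, map_add, add_mul, mul_ite, mul_one,
      mul_zero, Finset.sum_add_distrib, Finset.sum_mul, Pi.single_apply, ite_mul, zero_mul,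
      apply_ite (aeval Φ), map_zero, Finset.sum_ite_eq, Finset.mem_univ, if_true]
    congr 1
    exact Finset.sum_congr rfl fun v _ => by ring

noncomputable def newtonE (w : ℕ → ℂ) : ℕ → ℂ
  | n =>
    if hn : n = 0 then 1 else
      (n : ℂ)⁻¹ * ((-1) ^ (n + 1) *
        ∑ i ∈ (Finset.range n).attach,
          (-1) ^ (i : ℕ) * newtonE w i * w (n - (i : ℕ)))
  decreasing_by exact Finset.mem_range.mp i.2

lemma newtonE_zero (w : ℕ → ℂ) : newtonE w 0 = 1 := by rw [newtonE]; simp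

lemma newtonE_eq (w : ℕ → ℂ) {n : ℕ} (hn : n ≠ 0) :
    (n : ℂ) * newtonE w n =
      (-1) ^ (n + 1) * ∑ i ∈ Finset.range n, (-1) ^ i * newtonE w i * w (n - i) := by
  rw [newtonE, dif_neg hn, ← mul_assoc, mul_inv_cancel₀ (by exact_mod_cast hn : (n:ℂ) ≠ 0),
    one_mul, Finset.sum_attach (Finset.range n) (fun i => (-1 :ℂ) ^ i * newtonE w i * w (n - i))]

lemma psum_surj (t : ℕ) (w : Fin t → ℂ) :
    ∃ z : Fin t → ℂ, ∀ j : Fin t, ∑ m, z m ^ ((j : ℕ) + 1) = w j := by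
  rcases Nat.eq_zero_or_pos t with rfl | htpos
  · exact ⟨finZeroElim, fun j => j.elim0⟩
  obtain ⟨T, rfl⟩ : ∃ T, t = T + 1 := ⟨t - 1, by omega⟩
  set w' : ℕ → ℂ := fun n => if h : 0 < n ∧ n ≤ T + 1 then w ⟨n - 1, by omega⟩ else 0 with hw'
  set e : ℕ → ℂ := newtonE w' with he
  set q : Polynomial ℂ :=
    Polynomial.X ^ (T + 1) + ∑ i ∈ Finset.range (T + 1),
      Polynomial.C ((-1 : ℂ) ^ (i + 1) * e (i + 1)) * Polynomial.X ^ (T + 1 - (i + 1))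
    with hq
  have hdeg : (∑ i ∈ Finset.range (T + 1), Polynomial.C ((-1 : ℂ) ^ (i + 1) * e (i + 1))
      * Polynomial.X ^ (T + 1 - (i + 1))).degree ≤ (T : WithBot ℕ) := by
    refine (Polynomial.degree_sum_le _ _).trans ?_
    refine Finset.sup_le fun i hi => ?_
    refine (Polynomial.degree_C_mul_X_pow_le _ _).trans ?_
    exact_mod_cast Nat.cast_le.mpr (by omega : T + 1 - (i + 1) ≤ T)
  have hdeglt := lt_of_le_of_lt hdeg
    (by exact_mod_cast Nat.lt_succ_self T : (T : WithBot ℕ) < ((T + 1 : ℕ) : WithBot ℕ))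
  have hmonic : q.Monic := Polynomial.monic_X_pow_add hdeglt
  have hqdeg : q.natDegree = T + 1 := by
    have : q.degree = (T + 1 : ℕ) := by
      rw [hq, Polynomial.degree_add_eq_left_of_degree_lt, Polynomial.degree_X_pow]
      rw [Polynomial.degree_X_pow]
      exact hdeglt
    exact Polynomial.natDegree_eq_of_degree_eq_some this
  have hcard : Multiset.card q.roots = T + 1 := by
    rw [← hqdeg]
    exact Polynomial.splits_iff_card_roots.mp (IsAlgClosed.splits q)
  have hcoeff : ∀ n, 0 < n → n ≤ T + 1 → q.coeff (T + 1 - n) = (-1) ^ n * e n := by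
    intro n hn hnt
    rw [hq, Polynomial.coeff_add, Polynomial.coeff_X_pow, if_neg (by omega),
      Polynomial.finset_sum_coeff, zero_add]
    rw [Finset.sum_eq_single (n - 1)]
    · rw [Polynomial.coeff_C_mul, Polynomial.coeff_X_pow, if_pos (by omega)]
      have h : n - 1 + 1 = n := by omega
      rw [h, mul_one]
    · intro i hi hne
      rw [Polynomial.coeff_C_mul, Polynomial.coeff_X_pow, if_neg, mul_zero]
      have := Finset.mem_range.mp hi; omega
    · intro habs; exact absurd (Finset.mem_range.mpr (by omega)) habs
  have hesymm : ∀ n, n ≤ T + 1 → q.roots.esymm n = e n := by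
    intro n hnt
    rcases Nat.eq_zero_or_pos n with rfl | hn
    · rw [he, newtonE_zero]; simp [Multiset.esymm]
    have h1 := Multiset.prod_X_sub_C_coeff q.roots
      (show T + 1 - n ≤ Multiset.card q.roots by omega)
    rw [hcard] at h1
    have h2 : (Multiset.map (fun a => Polynomial.X - Polynomial.C a) q.roots).prod = q :=
      (Polynomial.prod_multiset_X_sub_C_of_monic_of_roots_card_eq hmonic
        (hcard.trans hqdeg.symm))
    rw [h2, hcoeff n hn hnt] at h1
    have h3 : T + 1 - (T + 1 - n) = n := by omega
    rw [h3] at h1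
    exact (mul_left_cancel₀ (pow_ne_zero n (by norm_num : (-1:ℂ) ≠ 0)) h1).symm
  -- the roots as a function
  set l : List ℂ := q.roots.toList with hl
  have hlen : l.length = T + 1 := by rw [hl, Multiset.length_toList, hcard]
  set z : Fin (T + 1) → ℂ := fun i => l.get (Fin.cast hlen.symm i) with hzdef
  have hmap : Multiset.map z Finset.univ.val = q.roots := by
    have h1 : List.ofFn z = l := by
      rw [hzdef, ← List.ofFn_congr hlen, List.ofFn_get]
    calc Multiset.map z Finset.univ.val
        = ((List.finRange (T + 1)).map z : Multiset ℂ) := by rw [Fin.univ_def]; rfl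
      _ = ((List.ofFn z : List ℂ) : Multiset ℂ) := by rw [List.ofFn_eq_map]
      _ = ((l : List ℂ) : Multiset ℂ) := by rw [h1]
      _ = q.roots := by rw [hl, Multiset.coe_toList]
  have hE : ∀ m, m ≤ T + 1 → aeval z (esymm (Fin (T + 1)) ℂ m) = e m := by
    intro m hm
    rw [aeval_esymm_eq_multiset_esymm, hmap, hesymm m hm]
  have key : ∀ n, 0 < n → n ≤ T + 1 → aeval z (psum (Fin (T + 1)) ℂ n) = w' n := by
    intro n
    induction n using Nat.strong_induction_on with
    | _ n IH =>
      intro h1 h2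
      rw [psum_eq_mul_esymm_sub_sum (Fin (T + 1)) ℂ n h1]
      simp only [map_sub, map_mul, map_sum, map_pow, map_neg, map_one, map_natCast]
      rw [hE n h2]
      have hsum : ∑ a ∈ {a ∈ Finset.HasAntidiagonal.antidiagonal n | a.1 ∈ Set.Ioo 0 n},
          (-1 : ℂ) ^ a.1 * aeval z (esymm (Fin (T + 1)) ℂ a.1)
            * aeval z (psum (Fin (T + 1)) ℂ a.2)
          = ∑ a ∈ {a ∈ Finset.HasAntidiagonal.antidiagonal n | a.1 ∈ Set.Ioo 0 n},
          (-1 : ℂ) ^ a.1 * e a.1 * w' a.2 := by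
        refine Finset.sum_congr rfl fun a ha => ?_
        obtain ⟨hmem, hIoo⟩ := Finset.mem_filter.mp ha
        have hadd := Finset.HasAntidiagonal.mem_antidiagonal.mp hmem
        obtain ⟨h01, h1n⟩ := hIoo
        rw [hE a.1 (by omega), IH a.2 (by omega) (by omega) (by omega)]
      rw [hsum]
      have hsum2 : ∑ a ∈ {a ∈ Finset.HasAntidiagonal.antidiagonal n | a.1 ∈ Set.Ioo 0 n},
          (-1 : ℂ) ^ a.1 * e a.1 * w' a.2
          = ∑ i ∈ Finset.range n, if 0 < i then (-1 : ℂ) ^ i * e i * w' (n - i) else 0 := by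
        rw [Finset.sum_filter, Finset.Nat.sum_antidiagonal_eq_sum_range_succ_mk,
          Finset.sum_range_succ]
        simp only [Set.mem_Ioo, lt_self_iff_false, and_false, if_false, add_zero]
        refine Finset.sum_congr rfl fun i hi => ?_
        have hilt := Finset.mem_range.mp hi
        by_cases h0i : 0 < i
        · rw [if_pos ⟨h0i, hilt⟩, if_pos h0i]
        · rw [if_neg (fun hc => h0i hc.1), if_neg h0i]
      rw [hsum2]
      obtain ⟨M, rfl⟩ : ∃ M, n = M + 1 := ⟨n - 1, by omega⟩
      have hite : ∑ i ∈ Finset.range (M + 1), (if 0 < i then (-1 : ℂ) ^ i * e i * w' (M + 1 - i) else 0)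
          = ∑ i ∈ Finset.range (M + 1), (-1 : ℂ) ^ i * e i * w' (M + 1 - i)
            - (-1 : ℂ) ^ 0 * e 0 * w' (M + 1 - 0) := by
        rw [eq_sub_iff_add_eq, Finset.sum_range_succ', Finset.sum_range_succ']
        simp
      rw [hite]
      have hF0 : (-1 : ℂ) ^ 0 * e 0 * w' (M + 1 - 0) = w' (M + 1) := by
        simp [he, newtonE_zero]
      have hNewton := newtonE_eq w' (Nat.succ_ne_zero M)
      rw [← he] at hNewton
      have hsq : ((-1 : ℂ) ^ (M + 1 + 1)) * ((-1 : ℂ) ^ (M + 1 + 1)) = 1 := by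
        rw [← pow_add]
        exact Even.neg_one_pow ⟨M + 2, by ring⟩
      have hmain : (-1 : ℂ) ^ (M + 1 + 1) * ((M + 1 : ℕ) : ℂ) * e (M + 1)
          = ∑ i ∈ Finset.range (M + 1), (-1 : ℂ) ^ i * e i * w' (M + 1 - i) := by
        rw [mul_assoc, hNewton, ← mul_assoc, hsq, one_mul]
      rw [hmain, hF0]
      ring
  refine ⟨z, fun j => ?_⟩
  have hkey := key ((j : ℕ) + 1) (Nat.succ_pos _) j.isLt
  have hps : aeval z (psum (Fin (T + 1)) ℂ ((j : ℕ) + 1)) = ∑ m, z m ^ ((j : ℕ) + 1) := by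
    simp [psum]
  rw [hps] at hkey
  rw [hkey]
  simp only [hw']
  rw [dif_pos ⟨Nat.succ_pos _, j.isLt⟩]
  congr 1

/-- if the `S_{t_1} × ⋯ × S_{t_k}`-invariant system `g = (g_1,…,g_s)`
satisfies condition (A) (Jacobian of rank `s` at every complex zero), and `h_i` are the
unique polynomials with `g_i = h_i(P_{1,1},…,P_{t_k,k})` (Newton power sums of the
blocks), then `(h_1,…,h_s)` also satisfies condition (A). -/
theorem newton_representation_preserves_conditionA
    (k s : ℕ) (t : Fin k → ℕ) (ht : ∀ i, 0 < t i)
    (g h : Fin s → MvPolynomial ((i : Fin k) × Fin (t i)) ℚ)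
    (hinv : ∀ a, ∀ σ : (i : Fin k) → Equiv.Perm (Fin (t i)),
      rename (fun p : (i : Fin k) × Fin (t i) =>
        (⟨p.1, σ p.1 p.2⟩ : (i : Fin k) × Fin (t i))) (g a) = g a)
    (hrep : ∀ a, aeval (fun p : (i : Fin k) × Fin (t i) =>
        ∑ m : Fin (t p.1),
          X (⟨p.1, m⟩ : (i : Fin k) × Fin (t i)) ^ ((p.2 : ℕ) + 1)) (h a) = g a)
    (hA : ∀ w : ((i : Fin k) × Fin (t i)) → ℂ, (∀ a, aeval w (g a) = 0) →
      (Matrix.of fun (a : Fin s) (v : (i : Fin k) × Fin (t i)) =>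
        aeval w (pderiv v (g a))).rank = s) :
    ∀ w : ((i : Fin k) × Fin (t i)) → ℂ, (∀ a, aeval w (h a) = 0) →
      (Matrix.of fun (a : Fin s) (v : (i : Fin k) × Fin (t i)) =>
        aeval w (pderiv v (h a))).rank = s := by
  classical
  intro w hw
  choose zi hzi using fun i : Fin k => psum_surj (t i) (fun j => w ⟨i, j⟩)
  set z0 : ((i : Fin k) × Fin (t i)) → ℂ := fun p => zi p.1 p.2 with hz0
  set Φ : ((i : Fin k) × Fin (t i)) → MvPolynomial ((i : Fin k) × Fin (t i)) ℚ :=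
    fun p => ∑ m : Fin (t p.1),
      X (⟨p.1, m⟩ : (i : Fin k) × Fin (t i)) ^ ((p.2 : ℕ) + 1) with hΦ
  have hΦval : ∀ p, aeval z0 (Φ p) = w p := by
    rintro ⟨i, j⟩
    simp only [hΦ, map_sum, map_pow, aeval_X, hz0]
    exact hzi i j
  have hcomp : ∀ f : MvPolynomial ((i : Fin k) × Fin (t i)) ℚ,
      aeval z0 (aeval Φ f) = aeval w f := by
    intro f
    rw [comp_aeval_apply, show (fun i => aeval z0 (Φ i)) = w from funext hΦval]
  have hg0 : ∀ a, aeval z0 (g a) = 0 := by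
    intro a
    rw [← hrep a, hcomp]
    exact hw a
  have hrank := hA z0 hg0
  set A : Matrix (Fin s) ((i : Fin k) × Fin (t i)) ℂ :=
    Matrix.of fun a v => aeval w (pderiv v (h a)) with hA'
  set B : Matrix ((i : Fin k) × Fin (t i)) ((i : Fin k) × Fin (t i)) ℂ :=
    Matrix.of fun v u => aeval z0 (pderiv u (Φ v)) with hB
  have hAB : (Matrix.of fun (a : Fin s) (u : (i : Fin k) × Fin (t i)) =>
      aeval z0 (pderiv u (g a))) = A * B := by
    ext a u
    simp only [Matrix.mul_apply, Matrix.of_apply, hA', hB]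
    rw [← hrep a, my_chain, map_sum]
    exact Finset.sum_congr rfl fun v _ => by rw [map_mul, hcomp]
  rw [hAB] at hrank
  refine le_antisymm ?_ ?_
  · simpa using A.rank_le_card_height.trans_eq (by simp)
  · calc (s : ℕ) = (A * B).rank := hrank.symm
      _ ≤ A.rank := Matrix.rank_mul_le_left A B
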